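/- Let I be an ideal of k[x₁,…,x_n] and u ∈ ℝ^n with all components strictly negative. Let O_alg = k[x]_{⟨x₁,…,x_n⟩} be the localization at the maximal ideal at the origin. Then the initial ideal of the extended ideal equals the initial ideal of I: in_u(O_alg·I) = in_u(I) as ideals of gr^u(k[x]) = k[x]. -/

import Mathlib

open scoped Classical

noncomputable section

/-- The `u`-weight of an exponent vector. -/
def wtR {n : ℕ} (u : Fin n → ℝ) (α : Fin n →₀ ℕ) : ℝ := ∑ i, u i * (α i : ℝ)

/-- `g` is the initial form `in_u(f)` of the nonzero power series `f`: for
`c = ord^u(f) = max{u·α | α ∈ supp f}` (attained), `g` consists of the terms of `f` of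
`u`-weight `c`. -/
def IsInit {n : ℕ} (K : Type*) [Field K] (u : Fin n → ℝ)
    (f : MvPowerSeries (Fin n) K) (g : MvPolynomial (Fin n) K) : Prop :=
  f ≠ 0 ∧ ∃ c : ℝ,
    (∃ α, MvPowerSeries.coeff α f ≠ 0 ∧ wtR u α = c) ∧
    (∀ α, MvPowerSeries.coeff α f ≠ 0 → wtR u α ≤ c) ∧
    (∀ α, MvPolynomial.coeff α g =
      if wtR u α = c then MvPowerSeries.coeff α f else 0)

lemma wtR_add {n : ℕ} (u : Fin n → ℝ) (α β : Fin n →₀ ℕ) :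
    wtR u (α + β) = wtR u α + wtR u β := by
  simp [wtR, Finsupp.add_apply, Nat.cast_add, mul_add, Finset.sum_add_distrib]

lemma wtR_neg {n : ℕ} {u : Fin n → ℝ} (hu : ∀ i, u i < 0) {α : Fin n →₀ ℕ} (hα : α ≠ 0) :
    wtR u α < 0 := by
  obtain ⟨i, hi⟩ : ∃ i, α i ≠ 0 := by
    by_contra h; push_neg at h
    exact hα (Finsupp.ext fun i => h i)
  have h1 : ∑ j ∈ ({i} : Finset (Fin n)), (-(u j * (α j : ℝ)))
      ≤ ∑ j, (-(u j * (α j : ℝ))) := by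
    refine Finset.sum_le_sum_of_subset_of_nonneg (Finset.subset_univ _) ?_
    intro j _ _
    have := mul_nonpos_of_nonpos_of_nonneg (hu j).le (Nat.cast_nonneg (α j))
    linarith
  have h2 : u i * (α i : ℝ) < 0 :=
    mul_neg_of_neg_of_pos (hu i) (by exact_mod_cast Nat.pos_of_ne_zero hi)
  have h3 : ∑ j, (-(u j * (α j : ℝ))) = - wtR u α := by
    simp [wtR]
  simp only [Finset.sum_singleton] at h1
  rw [h3] at h1
  linarith

/-- For an ideal `I ⊆ k[x]` and `u` with all components strictly negative,
`in_u(O_alg·I) = in_u(I)` as ideals of `gr^u(k[x]) = k[x]`, where `O_alg` is the localization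
of `k[x]` at the origin: elements of `O_alg·I` are power series `P` with `q·P = f` for some
`f ∈ I` and `q ∈ k[x]` with `q(0) ≠ 0`. -/
theorem initial_ideal_localization {n : ℕ} {K : Type*} [Field K]
    (I : Ideal (MvPolynomial (Fin n) K)) (u : Fin n → ℝ) (hu : ∀ i, u i < 0) :
    Ideal.span {g : MvPolynomial (Fin n) K |
        ∃ P : MvPowerSeries (Fin n) K,
          (∃ f ∈ I, ∃ q : MvPolynomial (Fin n) K, MvPolynomial.constantCoeff q ≠ 0 ∧
            (q : MvPowerSeries (Fin n) K) * P = (f : MvPowerSeries (Fin n) K)) ∧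
          IsInit K u P g} =
      Ideal.span {g : MvPolynomial (Fin n) K |
        ∃ f ∈ I, IsInit K u (f : MvPowerSeries (Fin n) K) g} := by
  apply le_antisymm
  · rw [Ideal.span_le]
    rintro g ⟨P, ⟨f, hfI, q, hq0, hqP⟩, hP0, c, ⟨α₀, hα₀, hwα₀⟩, hbd, hcoeff⟩
    set q0 : K := MvPolynomial.constantCoeff q with hq0def
    -- coefficient of f at α of weight ≥ c equals q0 * coeff α P
    have hqcoe : MvPowerSeries.coeff 0 (q : MvPowerSeries (Fin n) K) = q0 := by
      simp [MvPolynomial.coeff_coe, hq0def, MvPolynomial.constantCoeff_eq]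
    have key : ∀ α : Fin n →₀ ℕ, c ≤ wtR u α →
        MvPowerSeries.coeff α (f : MvPowerSeries (Fin n) K)
          = q0 * MvPowerSeries.coeff α P := by
      intro α hα
      rw [← hqP, MvPowerSeries.coeff_mul]
      rw [Finset.sum_eq_single ((0 : Fin n →₀ ℕ), α)]
      · rw [hqcoe]
      · rintro ⟨β, γ⟩ hmem hne
        rw [Finset.HasAntidiagonal.mem_antidiagonal] at hmem
        have hβ : β ≠ 0 := by
          rintro rfl
          exact hne (by simp [← hmem])
        have hγ : c < wtR u γ := by
          have := wtR_neg hu hβ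
          have hsum : wtR u β + wtR u γ = wtR u α := by rw [← wtR_add, hmem]
          linarith
        have : MvPowerSeries.coeff γ P = 0 := by
          by_contra h
          exact absurd (hbd γ h) (not_le.mpr hγ)
        simp [this]
      · intro h
        exact absurd (Finset.HasAntidiagonal.mem_antidiagonal.mpr (zero_add α)) h
    have hα₀f : MvPowerSeries.coeff α₀ (f : MvPowerSeries (Fin n) K) ≠ 0 := by
      rw [key α₀ hwα₀.ge]
      exact mul_ne_zero hq0 hα₀
    have hmem : MvPolynomial.C q0 * g ∈
        {g : MvPolynomial (Fin n) K | ∃ f ∈ I, IsInit K u (f : MvPowerSeries (Fin n) K) g} := by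
      refine ⟨f, hfI, ?_, c, ⟨α₀, hα₀f, hwα₀⟩, ?_, ?_⟩
      · intro h
        exact hα₀f (by simp [h])
      · intro α hα
        by_contra h
        have hgt : c < wtR u α := not_le.mp h
        have hPα : MvPowerSeries.coeff α P = 0 := by
          by_contra h'
          exact absurd (hbd α h') (not_le.mpr hgt)
        exact hα (by rw [key α hgt.le, hPα, mul_zero])
      · intro α
        rw [MvPolynomial.coeff_C_mul, hcoeff α]
        split_ifs with hw
        · rw [key α hw.ge]
        · rw [mul_zero]
    have hspan : MvPolynomial.C q0 * g ∈
        Ideal.span {g : MvPolynomial (Fin n) K |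
          ∃ f ∈ I, IsInit K u (f : MvPowerSeries (Fin n) K) g} :=
      Ideal.subset_span hmem
    have : g = MvPolynomial.C q0⁻¹ * (MvPolynomial.C q0 * g) := by
      rw [← mul_assoc, ← map_mul, inv_mul_cancel₀ hq0, map_one, one_mul]
    rw [this]
    exact Ideal.mul_mem_left _ _ hspan
  · apply Ideal.span_mono
    rintro g ⟨f, hfI, hinit⟩
    exact ⟨(f : MvPowerSeries (Fin n) K),
      ⟨f, hfI, 1, by simp, by push_cast; rw [one_mul]⟩, hinit⟩
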